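/- arXiv:2503.21852 — 2 statements merged into one kernel-verified Lean document; each statement's English description precedes it below -/
import Mathlib

section
/- For natural numbers k, l, m with k ≤ l and l − k ≤ m ≤ l: if every window of m consecutive moves of an infinite move sequence x contains at least l − k moves not satisfying the formula a (i.e., CC_min(l−k, m) holds for ¬a), then every window of l consecutive moves contains at most k moves satisfying a (i.e., CC_max(k,l) holds for a). -/
/-- The window counting constraint CC_max(k,l) for the formula `a`:
every window of `l` consecutive moves contains at most `k` moves satisfying `a`
(`x m' = true` records that move `m'` satisfies `a`). -/
def CCmax (k l : ℕ) (x : ℕ → Bool) : Prop :=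
  ∀ i : ℕ, ((Finset.Ico i (i + l)).filter (fun m' => x m' = true)).card ≤ k

/-- The window counting constraint CC_min(k,l) for the negated formula `¬a`:
every window of `l` consecutive moves contains at least `k` moves not
satisfying `a` (i.e. with `x m' = false`). -/
def CCminNeg (k l : ℕ) (x : ℕ → Bool) : Prop :=
  ∀ i : ℕ, k ≤ ((Finset.Ico i (i + l)).filter (fun m' => x m' = false)).card

theorem ccmin_neg_intermediate_implies_ccmax (k l m : ℕ) (hkl : k ≤ l)
    (hlow : l - k ≤ m) (hhigh : m ≤ l) (x : ℕ → Bool)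
    (h : CCminNeg (l - k) m x) : CCmax k l x := by
  intro i
  have hsub : (Finset.Ico i (i + m)).filter (fun m' => x m' = false) ⊆
      (Finset.Ico i (i + l)).filter (fun m' => x m' = false) :=
    Finset.filter_subset_filter _ (Finset.Ico_subset_Ico le_rfl (by omega))
  have hf : l - k ≤ ((Finset.Ico i (i + l)).filter (fun m' => x m' = false)).card :=
    le_trans (h i) (Finset.card_le_card hsub)
  have hsum : ((Finset.Ico i (i + l)).filter (fun m' => x m' = true)).card +
      ((Finset.Ico i (i + l)).filter (fun m' => x m' = false)).card = l := by
    have := Finset.card_filter_add_card_filter_not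
      (s := Finset.Ico i (i + l)) (p := fun m' => x m' = true)
    simp only [Bool.not_eq_true] at this
    simpa using this
  omega
end

section
/- Let w : Fin n → Bool be a finite word and k ≤ l natural numbers. There exists an infinite sequence x : ℕ → Bool extending w (i.e., x m = w m for all m < n) on which the window counting constraint CC_min(k,l) holds, if and only if CC_min(k,l) holds on the particular extension of w that is constantly true from position n onward. -/
/-- The window counting constraint CC_min(k,l): every window of `l`
consecutive moves contains at least `k` moves satisfying the formula. -/
def CCmin (k l : ℕ) (x : ℕ → Bool) : Prop :=
  ∀ i : ℕ, k ≤ ((Finset.Ico i (i + l)).filter (fun m => x m = true)).card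

theorem ccmin_prefix_extension_iff_all_true (n : ℕ) (w : Fin n → Bool)
    (k l : ℕ) (hkl : k ≤ l) :
    (∃ x : ℕ → Bool, (∀ m : ℕ, (h : m < n) → x m = w ⟨m, h⟩) ∧ CCmin k l x) ↔
      CCmin k l (fun m => if h : m < n then w ⟨m, h⟩ else true) := by
  constructor
  · rintro ⟨x, hx, hcc⟩ i
    refine le_trans (hcc i) (Finset.card_le_card ?_)
    intro m hm
    simp only [Finset.mem_filter] at hm ⊢
    refine ⟨hm.1, ?_⟩
    by_cases h : m < n
    · simp [h, ← hx m h, hm.2]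
    · simp [h]
  · intro hcc
    exact ⟨_, fun m h => by simp [h], hcc⟩
end
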